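/- Let g: X → X be measurable on a probability space (X, μ), μ-invariant and suppose a measurable non-negative function φ: X → [0, ∞] satisfies φ(x) = h(g(x)) − h(x) + c for a measurable function h and a constant c. Then φ ∈ L¹(μ) and ∫ φ dμ = c. (Integrability of a non-negative measurable coboundary-plus-constant.) -/

import Mathlib

open MeasureTheory

noncomputable def clampR (n : ℕ) (t : ℝ) : ℝ := max (min t n) (-(n:ℝ))

lemma clampR_meas (n : ℕ) : Measurable (clampR n) :=
  (measurable_id.min measurable_const).max measurable_const

lemma clampR_abs_le (n : ℕ) (t : ℝ) : |clampR n t| ≤ n := by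
  have hn : (0:ℝ) ≤ n := n.cast_nonneg
  rw [abs_le]
  constructor
  · exact le_max_right _ _
  · exact max_le (le_trans (min_le_right _ _) le_rfl) (by linarith)

lemma clampR_mono (n : ℕ) : Monotone (clampR n) := fun a b hab =>
  max_le_max (min_le_min hab le_rfl) le_rfl

lemma clampR_sub_le (n : ℕ) (a b : ℝ) : clampR n a - clampR n b ≤ max (a - b) 0 := by
  have hn : (0:ℝ) ≤ n := n.cast_nonneg
  unfold clampR
  rcases le_total a b with hab | hab <;>
  simp only [max_def, min_def] <;> split_ifs <;> linarith

lemma clampR_sub_ge (n : ℕ) (a b : ℝ) : min (a - b) 0 ≤ clampR n a - clampR n b := by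
  have := clampR_sub_le n b a
  have h2 : max (b - a) 0 = - min (a - b) 0 := by
    rcases le_total (a - b) 0 with h | h
    · rw [min_eq_left h, max_eq_left (by linarith : (0:ℝ) ≤ b - a)]; ring
    · rw [min_eq_right h, max_eq_right (by linarith : b - a ≤ 0)]; ring
  linarith [this, h2.le, h2.ge]

lemma clampR_eq (n : ℕ) (t : ℝ) (ht : |t| ≤ n) : clampR n t = t := by
  rw [abs_le] at ht
  unfold clampR
  rw [min_eq_left ht.2, max_eq_left ht.1]


/-- **Integrability of a non-negative measurable coboundary-plus-constant.**
If `g` preserves a probability measure `μ`, and a non-negative measurable function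
`φ` satisfies `φ(x) = h(g x) − h(x) + c` for a measurable `h` and a constant `c`,
then `φ` is integrable with `∫ φ dμ = c`. -/
theorem stmt12 {X : Type*} [MeasurableSpace X] (μ : Measure X) [IsProbabilityMeasure μ]
    (g : X → X) (hg : MeasurePreserving g μ μ)
    (φ h : X → ℝ) (hφm : Measurable φ) (hhm : Measurable h)
    (c : ℝ) (hφ0 : ∀ x, 0 ≤ φ x) (hco : ∀ x, φ x = h (g x) - h x + c) :
    Integrable φ μ ∧ ∫ x, φ x ∂μ = c := by
  have hint_clamp : ∀ (n : ℕ) (f : X → ℝ), Measurable f →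
      Integrable (fun x => clampR n (f x)) μ := by
    intro n f hf
    refine Integrable.mono' (integrable_const (n:ℝ)) ((clampR_meas n).comp hf).aestronglyMeasurable ?_
    filter_upwards with x
    rw [Real.norm_eq_abs]
    exact clampR_abs_le n (f x)
  -- integral is invariant under composition with g
  have hint_comp : ∀ (F : X → ℝ), Measurable F → ∫ x, F (g x) ∂μ = ∫ x, F x ∂μ := by
    intro F hF
    calc ∫ x, F (g x) ∂μ = ∫ y, F y ∂(Measure.map g μ) :=
          (integral_map hg.measurable.aemeasurable hF.aestronglyMeasurable).symm
      _ = ∫ y, F y ∂μ := by rw [hg.map_eq]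
  -- h (g x) - h x ≥ -c
  have hkey : ∀ x, h x - c ≤ h (g x) := by
    intro x; have := hco x; have := hφ0 x; linarith
  -- Step A : 0 ≤ c
  have hc0 : 0 ≤ c := by
    by_contra hc
    push_neg at hc
    set f : ℕ → X → ℝ := fun n x => clampR n (h x - c) - clampR n (h x) with hf
    have hfmeas : ∀ n, Measurable (f n) := fun n =>
      ((clampR_meas n).comp (hhm.sub measurable_const)).sub ((clampR_meas n).comp hhm)
    have hfnn : ∀ n x, 0 ≤ f n x := by
      intro n x
      have : clampR n (h x) ≤ clampR n (h x - c) := clampR_mono n (by linarith)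
      simp [hf]; linarith
    have hfint : ∀ n, Integrable (f n) μ := fun n =>
      (hint_clamp n _ (hhm.sub measurable_const)).sub (hint_clamp n _ hhm)
    have hfle : ∀ n, ∫ x, f n x ∂μ ≤ 0 := by
      intro n
      have hle : ∀ x, f n x ≤ clampR n (h (g x)) - clampR n (h x) := by
        intro x
        have : clampR n (h x - c) ≤ clampR n (h (g x)) := clampR_mono n (hkey x)
        simp [hf]; linarith
      have hint1 : Integrable (fun x => clampR n (h (g x))) μ :=
        hint_clamp n _ (hhm.comp hg.measurable)
      have hint2 : Integrable (fun x => clampR n (h x)) μ := hint_clamp n _ hhm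
      have hint12 : Integrable (fun x => clampR n (h (g x)) - clampR n (h x)) μ :=
        hint1.sub hint2
      have := integral_mono (hfint n) hint12 hle
      rw [integral_sub hint1 hint2, hint_comp (fun x => clampR n (h x)) ((clampR_meas n).comp hhm)] at this
      linarith
    have hfzero : ∀ n, f n =ᵐ[μ] 0 := by
      intro n
      have : ∫ x, f n x ∂μ = 0 := le_antisymm (hfle n) (integral_nonneg (fun x => hfnn n x))
      exact (integral_eq_zero_iff_of_nonneg (fun x => hfnn n x) (hfint n)).mp this
    -- the set where |h x - c| ≤ n and |h x| ≤ n has measure zero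
    have hAnull : ∀ n : ℕ, μ {x | |h x - c| ≤ n ∧ |h x| ≤ n} = 0 := by
      intro n
      refine measure_mono_null ?_ ((ae_iff).mp (hfzero n))
      intro x hx
      simp only [Set.mem_setOf_eq] at hx ⊢
      simp only [hf, Pi.zero_apply]
      rw [clampR_eq n _ hx.1, clampR_eq n _ hx.2]
      intro h'
      linarith
    have huniv : (Set.univ : Set X) = ⋃ n : ℕ, {x | |h x - c| ≤ n ∧ |h x| ≤ n} := by
      ext x
      simp only [Set.mem_univ, Set.mem_iUnion, Set.mem_setOf_eq, true_iff]
      obtain ⟨n, hn⟩ := exists_nat_ge (max |h x - c| |h x|)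
      exact ⟨n, le_trans (le_max_left _ _) hn, le_trans (le_max_right _ _) hn⟩
    have : μ Set.univ = 0 := by
      rw [huniv]
      exact measure_iUnion_null hAnull
    rw [measure_univ] at this
    exact one_ne_zero this
  -- Step B : define ψ n
  set ψ : ℕ → X → ℝ := fun n x => clampR n (h (g x)) - clampR n (h x) + c with hψ
  have hψmeas : ∀ n, Measurable (ψ n) := fun n =>
    (((clampR_meas n).comp (hhm.comp hg.measurable)).sub ((clampR_meas n).comp hhm)).add measurable_const
  have hψ0 : ∀ n x, 0 ≤ ψ n x := by
    intro n x
    have h1 := clampR_sub_ge n (h (g x)) (h x)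
    have h2 : -c ≤ h (g x) - h x := by linarith [hkey x]
    have h3 : min (h (g x) - h x) 0 ≥ -c := le_min h2 (by linarith)
    show 0 ≤ clampR n (h (g x)) - clampR n (h x) + c
    linarith
  have hψle : ∀ n x, ψ n x ≤ φ x + c := by
    intro n x
    have h1 := clampR_sub_le n (h (g x)) (h x)
    have h2 : max (h (g x) - h x) 0 ≤ φ x := by
      refine max_le ?_ (hφ0 x)
      have := hco x; linarith
    show clampR n (h (g x)) - clampR n (h x) + c ≤ φ x + c
    linarith
  have hψint : ∀ n, Integrable (ψ n) μ := fun n =>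
    ((hint_clamp n _ (hhm.comp hg.measurable)).sub (hint_clamp n _ hhm)).add (integrable_const c)
  have hψval : ∀ n, ∫ x, ψ n x ∂μ = c := by
    intro n
    have hint1 : Integrable (fun x => clampR n (h (g x))) μ := hint_clamp n _ (hhm.comp hg.measurable)
    have hint2 : Integrable (fun x => clampR n (h x)) μ := hint_clamp n _ hhm
    have hint12 : Integrable (fun x => clampR n (h (g x)) - clampR n (h x)) μ :=
      hint1.sub hint2
    show ∫ x, clampR n (h (g x)) - clampR n (h x) + c ∂μ = c
    rw [integral_add hint12 (integrable_const c), integral_sub hint1 hint2,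
      hint_comp (fun x => clampR n (h x)) ((clampR_meas n).comp hhm), integral_const,
      probReal_univ]
    simp
  have hψtend : ∀ x, Filter.Tendsto (fun n => ψ n x) Filter.atTop (nhds (φ x)) := by
    intro x
    have hev : ∀ᶠ n in Filter.atTop, ψ n x = φ x := by
      obtain ⟨N, hN⟩ := exists_nat_ge (max |h (g x)| |h x|)
      filter_upwards [Filter.eventually_ge_atTop N] with n hn
      have hn' : (N:ℝ) ≤ n := Nat.cast_le.mpr hn
      show clampR n (h (g x)) - clampR n (h x) + c = φ x
      rw [clampR_eq n _ (le_trans (le_trans (le_max_left _ _) hN) hn'),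
        clampR_eq n _ (le_trans (le_trans (le_max_right _ _) hN) hn')]
      rw [hco x]
    exact Filter.Tendsto.congr' (hev.mono fun n hn => hn.symm) tendsto_const_nhds
  -- Fatou: φ has finite lintegral
  have hlin : ∀ n, ∫⁻ x, ENNReal.ofReal (ψ n x) ∂μ = ENNReal.ofReal c := by
    intro n
    rw [← ofReal_integral_eq_lintegral_ofReal (hψint n) (Filter.Eventually.of_forall (hψ0 n)),
      hψval n]
  have hfatou : ∫⁻ x, ENNReal.ofReal (φ x) ∂μ ≤ ENNReal.ofReal c := by
    have hle := lintegral_liminf_le (μ := μ) (f := fun n x => ENNReal.ofReal (ψ n x)) (u := Filter.atTop)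
      (fun n => ENNReal.measurable_ofReal.comp (hψmeas n))
    have h1 : ∀ x, Filter.liminf (fun n => ENNReal.ofReal (ψ n x)) Filter.atTop
        = ENNReal.ofReal (φ x) := by
      intro x
      exact ((ENNReal.continuous_ofReal.tendsto _).comp (hψtend x)).liminf_eq
    have h2 : Filter.liminf (fun n => ∫⁻ x, ENNReal.ofReal (ψ n x) ∂μ) Filter.atTop
        = ENNReal.ofReal c := by
      simp only [hlin]
      exact Filter.liminf_const _
    calc ∫⁻ x, ENNReal.ofReal (φ x) ∂μ
        = ∫⁻ x, Filter.liminf (fun n => ENNReal.ofReal (ψ n x)) Filter.atTop ∂μ := by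
          simp only [h1]
      _ ≤ _ := hle
      _ = ENNReal.ofReal c := h2
  have hφint : Integrable φ μ := by
    refine ⟨hφm.aestronglyMeasurable, ?_⟩
    rw [hasFiniteIntegral_iff_norm]
    have : ∫⁻ x, ENNReal.ofReal ‖φ x‖ ∂μ = ∫⁻ x, ENNReal.ofReal (φ x) ∂μ := by
      congr 1; ext x; rw [Real.norm_of_nonneg (hφ0 x)]
    rw [this]
    exact lt_of_le_of_lt hfatou ENNReal.ofReal_lt_top
  -- dominated convergence
  have hdom : Filter.Tendsto (fun n => ∫ x, ψ n x ∂μ) Filter.atTop (nhds (∫ x, φ x ∂μ)) := by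
    refine tendsto_integral_of_dominated_convergence (fun x => φ x + c)
      (fun n => (hψmeas n).aestronglyMeasurable) (hφint.add (integrable_const c)) ?_ ?_
    · intro n
      filter_upwards with x
      rw [Real.norm_of_nonneg (hψ0 n x)]
      exact hψle n x
    · filter_upwards with x using hψtend x
  have : Filter.Tendsto (fun _ : ℕ => c) Filter.atTop (nhds (∫ x, φ x ∂μ)) := by
    refine hdom.congr (fun n => (hψval n)) 
  exact ⟨hφint, tendsto_nhds_unique this tendsto_const_nhds⟩
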